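/- In any feasible update sequence for the update flow network G(C) constructed from a 3-SAT formula C, for every round r at or after the round in which s updates the blocking pair B and for every clause index i, at least one of the updates (u^i, D₁), (u^i, D₂), (u^i, D₃) was resolved strictly before round r. -/

import Mathlib

/-!
A formal model of congestion-free flow rerouting (network update scheduling).
An update flow network consists of a source `s`, a terminal `t`, edge
capacities, and `k` update flow pairs, each given by an old `s`-`t` path and
an update (new) `s`-`t` path (represented as lists of vertices) with a demand.
An update sequence assigns to every update `(v, i)` (vertex `v`, pair `i`) a
round; it is feasible if resolving all updates of earlier rounds together with
any subset of the current round always leaves, for every pair, a unique valid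
(capacity-respecting) transient `s`-`t` path among the active edges, and the
family of transient paths jointly respects the capacities.
-/

namespace FlowUpdate

variable {V : Type} [DecidableEq V] {k : ℕ}

/-- The edges of a path given as a list of vertices. -/
def edgesOf (p : List V) : List (V × V) := p.zip p.tail

/-- The subpath of `p` from vertex `a` to vertex `z` (inclusive). -/
def segment (p : List V) (a z : V) : List V :=
  ((p.dropWhile (fun v => decide (v ≠ a))).takeWhile (fun v => decide (v ≠ z))) ++ [z]

/-- The outgoing edge of `v` on the path `p`, if any. -/
def outEdge (p : List V) (v : V) : Option (V × V) :=
  (edgesOf p).find? (fun e => decide (e.1 = v))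

/-- An update flow network with `k` update flow pairs. -/
structure UFN (V : Type) (k : ℕ) where
  s : V
  t : V
  cap : V → V → ℕ
  old : Fin k → List V
  new : Fin k → List V
  demand : Fin k → ℕ

namespace UFN

/-- After resolving the set of updates `U`, edge `e` is active for pair `i` iff
it is an old edge whose tail is not yet updated, or a new edge whose tail is
updated. -/
def active (G : UFN V k) (U : Set (V × Fin k)) (i : Fin k) (e : V × V) : Prop :=
  (e ∈ edgesOf (G.old i) ∧ (e.1, i) ∉ U) ∨ (e ∈ edgesOf (G.new i) ∧ (e.1, i) ∈ U)

/-- `p` is a simple `s`-`t` path all of whose edges satisfy `E`. -/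
def IsPathIn (E : V × V → Prop) (s t : V) (p : List V) : Prop :=
  p.head? = some s ∧ p.getLast? = some t ∧ List.Chain' (fun u v => E (u, v)) p ∧ p.Nodup

/-- `p` respects the capacities for the demand of pair `i`. -/
def ValidPath (G : UFN V k) (i : Fin k) (p : List V) : Prop :=
  ∀ e ∈ edgesOf p, G.demand i ≤ G.cap e.1 e.2

/-- `T` is the unique valid transient path of pair `i` after resolving `U`. -/
def TransientPair (G : UFN V k) (U : Set (V × Fin k)) (i : Fin k) (T : List V) : Prop :=
  IsPathIn (G.active U i) G.s G.t T ∧ G.ValidPath i T ∧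
    ∀ p, IsPathIn (G.active U i) G.s G.t p → G.ValidPath i p → p = T

/-- After resolving `U`, every pair has a unique valid transient path, and the
family of transient paths jointly respects the capacities. -/
def TransientFamily (G : UFN V k) (U : Set (V × Fin k)) : Prop :=
  ∃ T : Fin k → List V,
    (∀ i, G.TransientPair U i (T i)) ∧
    (∀ u v : V, (∑ i : Fin k, if (u, v) ∈ edgesOf (T i) then G.demand i else 0) ≤ G.cap u v)

/-- An update sequence (an assignment of rounds to all updates) is feasible if
after resolving all updates of rounds `< r` together with any subset of the
updates of round `r`, all pairs admit a transient family. -/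
def Feasible (G : UFN V k) (R : V × Fin k → ℕ) : Prop :=
  ∀ r : ℕ, ∀ S : Set (V × Fin k), (∀ u ∈ S, R u = r) →
    G.TransientFamily ({u | R u < r} ∪ S)

/-- `p` is a simple path from the source to the terminal. -/
def IsStPath (G : UFN V k) (p : List V) : Prop :=
  p.head? = some G.s ∧ p.getLast? = some G.t ∧ p.Nodup

/-- Well-formedness of an update flow network: all old and new flows are simple
`s`-`t` paths, each pair forms a DAG, each new path respects capacities for its
own demand, and both the old family and the new family jointly respect the
capacities. -/
def WellFormed (G : UFN V k) : Prop :=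
  (∀ i, G.IsStPath (G.old i) ∧ G.IsStPath (G.new i)) ∧
  (∀ i, ∃ ord : V → ℕ, ∀ e ∈ edgesOf (G.old i) ++ edgesOf (G.new i), ord e.1 < ord e.2) ∧
  (∀ i, G.ValidPath i (G.new i)) ∧
  (∀ u v : V, (∑ i : Fin k, if (u, v) ∈ edgesOf (G.old i) then G.demand i else 0) ≤ G.cap u v) ∧
  (∀ u v : V, (∑ i : Fin k, if (u, v) ∈ edgesOf (G.new i) then G.demand i else 0) ≤ G.cap u v)

/-- The common vertices of the old and new path of pair `i`, in path order. -/
def commons (G : UFN V k) (i : Fin k) : List V :=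
  (G.old i).filter (fun v => decide (v ∈ G.new i))

/-- A block of pair `i` is a pair `(a, z)` of consecutive common vertices of the
old and new paths of `i`. -/
def IsBlock (G : UFN V k) (i : Fin k) (b : V × V) : Prop :=
  b ∈ edgesOf (G.commons i)

/-- A (candidate) block: a pair index together with its start and end vertices. -/
abbrev Blk (V : Type) (k : ℕ) := Fin k × V × V

def IsBlk (G : UFN V k) (b : Blk V k) : Prop := G.IsBlock b.1 b.2

/-- The old-path segment of a block. -/
def blkOldSeg (G : UFN V k) (b : Blk V k) : List V := segment (G.old b.1) b.2.1 b.2.2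

/-- The update-path segment of a block. -/
def blkNewSeg (G : UFN V k) (b : Blk V k) : List V := segment (G.new b.1) b.2.1 b.2.2

/-- Block `b1` depends on block `b2` (written `b1 → b2`) if they belong to
different pairs and some edge lies on `b1`'s update path and on `b2`'s old path
with capacity less than the sum of the two demands. -/
def Dep (G : UFN V k) (b1 b2 : Blk V k) : Prop :=
  G.IsBlk b1 ∧ G.IsBlk b2 ∧ b1.1 ≠ b2.1 ∧
  ∃ e : V × V, e ∈ edgesOf (G.blkNewSeg b1) ∧ e ∈ edgesOf (G.blkOldSeg b2) ∧
    G.cap e.1 e.2 < G.demand b1.1 + G.demand b2.1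

/-- The dependency graph contains a directed cycle. -/
def HasDepCycle (G : UFN V k) : Prop := ∃ b : Blk V k, Relation.TransGen G.Dep b b

/-- The number of rounds used by an update sequence. -/
def numRounds [Fintype V] (R : V × Fin k → ℕ) : ℕ :=
  (Finset.image R Finset.univ).card

/-- An update `(v, i)` is empty if `v`'s outgoing old edge and outgoing new edge
for pair `i` coincide (in particular if `v` has no outgoing edge for pair `i`). -/
def EmptyUpd (G : UFN V k) (u : V × Fin k) : Prop :=
  outEdge (G.old u.2) u.1 = outEdge (G.new u.2) u.1

instance (G : UFN V k) (u : V × Fin k) : Decidable (G.EmptyUpd u) :=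
  inferInstanceAs (Decidable (outEdge (G.old u.2) u.1 = outEdge (G.new u.2) u.1))

/-- `R` updates every block in (at most) 3 consecutive rounds: first all internal
update-path vertices of the block, then the start vertex, then all old-path-only
vertices of the block. -/
def BlockPattern (G : UFN V k) (R : V × Fin k → ℕ) : Prop :=
  ∀ b : Blk V k, G.IsBlk b → ∃ r : ℕ,
    (∀ v ∈ G.blkNewSeg b, v ≠ b.2.1 → v ≠ b.2.2 → R (v, b.1) = r) ∧
    R (b.2.1, b.1) = r + 1 ∧
    (∀ v ∈ G.blkOldSeg b, v ∉ G.new b.1 → R (v, b.1) = r + 2)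

/-- The size of the network (total length of the flow paths). -/
def size (G : UFN V k) : ℕ := ∑ i : Fin k, ((G.old i).length + (G.new i).length)

end UFN

end FlowUpdate

namespace FlowUpdate

/-! The update flow network `GC C n` constructed from a 3-SAT formula `C` with
`n` variables, as in the NP-hardness reduction.  The six flow pairs are indexed
by `Fin 6`: `0 = X`, `1 = X̄`, `2,3,4 = D₁,D₂,D₃`, `5 = B`; all have demand 1. -/

/-- A 3-SAT clause: three literals, each a variable index with a polarity. -/
abbrev Clause := Fin 3 → ℕ × Bool

/-- `σ` satisfies the formula `C`. -/
def Satisfies (C : List Clause) (σ : ℕ → Bool) : Prop :=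
  ∀ cl ∈ C, ∃ p : Fin 3, σ (cl p).1 = (cl p).2

/-- All variable indices occurring in `C` are `< n`. -/
def GoodFormula (C : List Clause) (n : ℕ) : Prop :=
  ∀ cl ∈ C, ∀ p : Fin 3, (cl p).1 < n

/-- The vertices of the network `GC C n`. -/
inductive GV where
  | s | t
  | u (i : ℕ) | v (i : ℕ)
  | uu (i : ℕ) (j : Fin 3) | vv (i : ℕ) (j : Fin 3)
  | w1 (j : ℕ) | w2 (j : ℕ)
deriving DecidableEq

/-- Capacities: `(w1 j, w2 j)` has capacity 2, `(u i, v i)` capacity 3, the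
detour edges `(uu i p, vv i p)` capacity 1, all other edges capacity 6. -/
def capC : GV → GV → ℕ
  | .w1 j, .w2 j' => if j = j' then 2 else 6
  | .u i, .v i' => if i = i' then 3 else 6
  | .uu i p, .vv i' p' => if i = i' ∧ p = p' then 1 else 6
  | _, _ => 6

/-- The occurrences (clause index, position) of the literal `(j, pol)` in `C`. -/
def occ (C : List Clause) (j : ℕ) (pol : Bool) : List (ℕ × Fin 3) :=
  (List.range C.length).flatMap fun i =>
    (List.finRange 3).filterMap fun p =>
      if (C.getD i (fun _ => (0, true))) p = (j, pol) then some (i, p) else none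

/-- The detour vertices visited by the old path of the literal `(j, pol)`. -/
def litPath (C : List Clause) (j : ℕ) (pol : Bool) : List GV :=
  (occ C j pol).flatMap fun ip => [GV.uu ip.1 ip.2, GV.vv ip.1 ip.2]

/-- The old path of `X` (`pol = true`) resp. of `X̄` (`pol = false`). -/
def Xold (C : List Clause) (n : ℕ) (pol : Bool) : List GV :=
  [GV.s] ++ ((List.range n).flatMap fun j => [GV.w1 j] ++ litPath C j pol ++ [GV.w2 j]) ++ [GV.t]

/-- The update path of `X` and `X̄`, which is also the old path of `B`. -/
def Xupd (n : ℕ) : List GV :=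
  [GV.s] ++ ((List.range n).flatMap fun j => [GV.w1 j, GV.w2 j]) ++ [GV.t]

/-- The old path of each `D_j`, which is also the update path of `B`. -/
def Dold (m : ℕ) : List GV :=
  [GV.s] ++ ((List.range m).flatMap fun i => [GV.u i, GV.v i]) ++ [GV.t]

/-- The update path of `D_j`, detouring each clause edge through `(uu i j, vv i j)`. -/
def Dupd (m : ℕ) (j : Fin 3) : List GV :=
  [GV.s] ++ ((List.range m).flatMap fun i => [GV.u i, GV.uu i j, GV.vv i j, GV.v i]) ++ [GV.t]

/-- The update flow network constructed from the 3-SAT formula `C` with `n`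
variables. -/
def GC (C : List Clause) (n : ℕ) : UFN GV 6 where
  s := GV.s
  t := GV.t
  cap := capC
  old := ![Xold C n true, Xold C n false, Dold C.length, Dold C.length, Dold C.length, Xupd n]
  new := ![Xupd n, Xupd n, Dupd C.length 0, Dupd C.length 1, Dupd C.length 2, Dold C.length]
  demand := fun _ => 1

end FlowUpdate

namespace FlowUpdate

/-! ### Auxiliary lemmas for `stmt10` -/

section EdgeLemmas

variable {α : Type}

lemma edgesOf_nil : edgesOf ([] : List α) = [] := rfl
lemma edgesOf_single (a : α) : edgesOf [a] = [] := rfl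
lemma edgesOf_cons_cons (a b : α) (p : List α) :
    edgesOf (a :: b :: p) = (a, b) :: edgesOf (b :: p) := rfl

lemma mem_of_mem_edgesOf {e : α × α} {p : List α} (he : e ∈ edgesOf p) :
    e.1 ∈ p ∧ e.2 ∈ p := by
  have := List.of_mem_zip (show (e.1, e.2) ∈ p.zip p.tail from he)
  exact ⟨this.1, List.mem_of_mem_tail this.2⟩

lemma edgesOf_prefix {e : α × α} : ∀ {l : List α} (r : List α), e ∈ edgesOf l → e ∈ edgesOf (l ++ r)
  | [], r, h => by simp [edgesOf_nil] at h
  | [a], r, h => by simp [edgesOf_single] at h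
  | a :: b :: l, r, h => by
      rw [edgesOf_cons_cons] at h
      rw [List.cons_append, List.cons_append, edgesOf_cons_cons, ← List.cons_append]
      rcases List.mem_cons.mp h with h | h
      · exact h ▸ List.mem_cons_self
      · exact List.mem_cons_of_mem _ (edgesOf_prefix r h)

lemma mem_edgesOf_append {e : α × α} : ∀ {l : List α} (r : List α), e ∈ edgesOf (l ++ r) →
    e ∈ edgesOf l ∨ e ∈ edgesOf r ∨ (l.getLast? = some e.1 ∧ r.head? = some e.2)
  | [], r, h => Or.inr (Or.inl h)
  | [a], r, h => by
      cases r with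
      | nil => simp [edgesOf_single] at h
      | cons b r' =>
        rw [show [a] ++ b :: r' = a :: b :: r' from rfl, edgesOf_cons_cons] at h
        rcases List.mem_cons.mp h with h | h
        · subst h; exact Or.inr (Or.inr ⟨rfl, rfl⟩)
        · exact Or.inr (Or.inl h)
  | a :: c :: l, r, h => by
      rw [List.cons_append, List.cons_append, edgesOf_cons_cons, ← List.cons_append] at h
      rcases List.mem_cons.mp h with h | h
      · subst h
        exact Or.inl (List.mem_cons_self)
      · rcases mem_edgesOf_append r h with h | h | h
        · exact Or.inl (List.mem_cons_of_mem _ h)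
        · exact Or.inr (Or.inl h)
        · exact Or.inr (Or.inr ⟨by rw [List.getLast?_cons_cons]; exact h.1, h.2⟩)

lemma mem_getLast? : ∀ {p : List α} {a : α}, p.getLast? = some a → a ∈ p
  | [], a, h => by simp at h
  | [b], a, h => by simp_all
  | b :: c :: p, a, h => by
      rw [List.getLast?_cons_cons] at h
      exact List.mem_cons_of_mem _ (mem_getLast? h)

lemma chain_cross {E : α → α → Prop} {P : α → Prop} :
    ∀ (p : List α), List.Chain' E p → ∀ s, p.head? = some s → P s →
      ∀ a ∈ p, ¬ P a → ∃ x y, E x y ∧ P x ∧ ¬ P y ∧ y ∈ p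
  | [], _, s, hs, _, a, ha, _ => by simp at ha
  | [x], hch, s, hs, hPs, a, ha, hna => by
      simp_all
  | x :: b :: p, hch, s, hs, hPs, a, ha, hna => by
      obtain ⟨hE, hch'⟩ := List.isChain_cons_cons.mp hch
      simp only [List.head?_cons, Option.some.injEq] at hs
      subst hs
      by_cases hPb : P b
      · have ha' : a ∈ b :: p := by
          rcases List.mem_cons.mp ha with h | h
          · exact absurd (h ▸ hPs) hna
          · exact h
        obtain ⟨x', y', h1, h2, h3, h4⟩ :=
          chain_cross (b :: p) hch' b rfl hPb a ha' hna
        exact ⟨x', y', h1, h2, h3, List.mem_cons_of_mem _ h4⟩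
      · exact ⟨x, b, hE, hPs, hPb, List.mem_cons_of_mem _ (List.mem_cons_self)⟩

lemma chain_out_edge {E : α → α → Prop} :
    ∀ (p : List α), List.Chain' E p → ∀ y ∈ p, ∀ t, p.getLast? = some t → y ≠ t →
      ∃ c, E y c ∧ (y, c) ∈ edgesOf p
  | [], _, y, hy, _, _, _ => by simp at hy
  | [x], _, y, hy, t, ht, hyt => by simp_all
  | x :: b :: p, hch, y, hy, t, ht, hyt => by
      obtain ⟨hE, hch'⟩ := List.isChain_cons_cons.mp hch
      rcases List.mem_cons.mp hy with h | h
      · subst h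
        exact ⟨b, hE, by rw [edgesOf_cons_cons]; exact List.mem_cons_self⟩
      · rw [List.getLast?_cons_cons] at ht
        obtain ⟨c, h1, h2⟩ := chain_out_edge (b :: p) hch' y h t ht hyt
        exact ⟨c, h1, by rw [edgesOf_cons_cons]; exact List.mem_cons_of_mem _ h2⟩

/-- Characterization (forward direction) of the edges of a "sandwich" path
`s :: blocks ++ [t]`. -/
lemma mem_edgesOf_sandwich (f : ℕ → List α) (s t : α) (hst : s ≠ t)
    (hf : ∀ i, f i ≠ []) (ht : ∀ i, t ∉ f i) :
    ∀ (m : ℕ) (e : α × α), e ∈ edgesOf (s :: ((List.range m).flatMap f ++ [t])) →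
    (∃ i < m, e ∈ edgesOf (f i)) ∨
    (∃ i, i + 1 < m ∧ (f i).getLast? = some e.1 ∧ (f (i+1)).head? = some e.2) ∨
    (0 < m ∧ e.1 = s ∧ (f 0).head? = some e.2) ∨
    (0 < m ∧ (f (m-1)).getLast? = some e.1 ∧ e.2 = t) ∨
    (m = 0 ∧ e = (s, t)) := by
  intro m
  induction m with
  | zero =>
    intro e he
    simp only [List.range_zero, List.flatMap_nil, List.nil_append] at he
    rw [edgesOf_cons_cons] at he
    rcases List.mem_cons.mp he with h | h
    · exact Or.inr (Or.inr (Or.inr (Or.inr ⟨rfl, h⟩)))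
    · simp [edgesOf_single] at h
  | succ m ih =>
    intro e he
    rw [List.range_succ, List.flatMap_append, List.flatMap_cons, List.flatMap_nil,
      List.append_nil] at he
    set L := (List.range m).flatMap f with hL
    have heq : s :: ((L ++ f m) ++ [t]) = (s :: L) ++ (f m ++ [t]) := by simp
    rw [heq] at he
    rcases mem_edgesOf_append _ he with h | h | h
    · -- edge within the prefix `s :: L`
      have he2 : e.2 ∈ s :: L := (mem_of_mem_edgesOf h).2
      have he2t : e.2 ≠ t := by
        intro hh
        rw [hh] at he2
        rcases List.mem_cons.mp he2 with h' | h'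
        · exact hst h'.symm
        · obtain ⟨j, _, hj⟩ := List.mem_flatMap.mp h'
          exact ht j hj
      have h' := edgesOf_prefix [t] h
      rw [show (s :: L) ++ [t] = s :: (L ++ [t]) from rfl] at h'
      rcases ih e h' with ⟨j, hj, h⟩ | ⟨j, hj, h⟩ | ⟨hm, h⟩ | ⟨hm, h⟩ | ⟨hm, h⟩
      · exact Or.inl ⟨j, Nat.lt_succ_of_lt hj, h⟩
      · exact Or.inr (Or.inl ⟨j, Nat.lt_succ_of_lt hj, h⟩)
      · exact Or.inr (Or.inr (Or.inl ⟨Nat.succ_pos m, h⟩))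
      · exact absurd h.2 he2t
      · exact absurd (congrArg Prod.snd h) he2t
    · -- edge within `f m ++ [t]`
      rcases mem_edgesOf_append _ h with h | h | h
      · exact Or.inl ⟨m, Nat.lt_succ_self m, h⟩
      · simp [edgesOf_single] at h
      · refine Or.inr (Or.inr (Or.inr (Or.inl ⟨Nat.succ_pos m, ?_, ?_⟩)))
        · simpa using h.1
        · simpa using h.2.symm
    · -- connector from `s :: L` into `f m`
      have hhead : (f m ++ [t]).head? = (f m).head? := List.head?_append_of_ne_nil _ (hf m)
      rw [hhead] at h
      cases m with
      | zero =>
        have hL0 : L = [] := by simp [hL]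
        rw [hL0] at h
        simp only [List.getLast?_singleton, Option.some.injEq] at h
        exact Or.inr (Or.inr (Or.inl ⟨Nat.succ_pos 0, h.1.symm, h.2⟩))
      | succ k =>
        have hlast : (s :: L).getLast? = (f k).getLast? := by
          rw [hL, List.range_succ, List.flatMap_append, List.flatMap_cons, List.flatMap_nil,
            List.append_nil, show s :: ((List.range k).flatMap f ++ f k)
              = (s :: (List.range k).flatMap f) ++ f k from rfl]
          exact List.getLast?_append_of_ne_nil _ (hf k)
        rw [hlast] at h
        exact Or.inr (Or.inl ⟨k, by omega, h.1, h.2⟩)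

end EdgeLemmas
end FlowUpdate

namespace FlowUpdate

/-- The vertices "strictly below" the clause vertex `u i` in the `D`-pair order. -/
def low (i : ℕ) : GV → Prop
  | GV.s => True
  | GV.u i' => i' < i
  | GV.uu i' _ => i' < i
  | GV.vv i' _ => i' < i
  | GV.v i' => i' < i
  | _ => False

lemma dold_eq (m : ℕ) :
    Dold m = GV.s :: ((List.range m).flatMap (fun i => [GV.u i, GV.v i]) ++ [GV.t]) := by
  simp [Dold]

lemma dupd_eq (m : ℕ) (j : Fin 3) :
    Dupd m j = GV.s ::
      ((List.range m).flatMap (fun i => [GV.u i, GV.uu i j, GV.vv i j, GV.v i]) ++ [GV.t]) := by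
  simp [Dupd]

lemma xupd_eq (n : ℕ) :
    Xupd n = GV.s :: ((List.range n).flatMap (fun j => [GV.w1 j, GV.w2 j]) ++ [GV.t]) := by
  simp [Xupd]

lemma dold_cases {m : ℕ} {e : GV × GV} (he : e ∈ edgesOf (Dold m)) :
    (∃ i < m, e = (GV.u i, GV.v i)) ∨
    (∃ i, i + 1 < m ∧ e = (GV.v i, GV.u (i+1))) ∨
    (0 < m ∧ e = (GV.s, GV.u 0)) ∨
    (0 < m ∧ e = (GV.v (m-1), GV.t)) ∨
    (m = 0 ∧ e = (GV.s, GV.t)) := by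
  rw [dold_eq] at he
  have := mem_edgesOf_sandwich (fun i => [GV.u i, GV.v i]) GV.s GV.t
    (by simp) (by simp) (by simp) m e he
  obtain ⟨x, y⟩ := e
  rcases this with ⟨i, hi, h⟩ | ⟨i, hi, h1, h2⟩ | ⟨hm, h1, h2⟩ | ⟨hm, h1, h2⟩ | ⟨hm, h⟩
  · rw [show edgesOf [GV.u i, GV.v i] = [(GV.u i, GV.v i)] from rfl] at h
    simp at h
    exact Or.inl ⟨i, hi, by simp [h]⟩
  · simp at h1 h2
    exact Or.inr (Or.inl ⟨i, hi, by simp [← h1, h2]⟩)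
  · simp at h2
    exact Or.inr (Or.inr (Or.inl ⟨hm, Prod.ext_iff.mpr ⟨h1, h2.symm⟩⟩))
  · simp at h1
    exact Or.inr (Or.inr (Or.inr (Or.inl ⟨hm, Prod.ext_iff.mpr ⟨h1.symm, h2⟩⟩)))
  · exact Or.inr (Or.inr (Or.inr (Or.inr ⟨hm, h⟩)))

lemma dupd_cases {m : ℕ} {j : Fin 3} {e : GV × GV} (he : e ∈ edgesOf (Dupd m j)) :
    (∃ i < m, e = (GV.u i, GV.uu i j) ∨ e = (GV.uu i j, GV.vv i j) ∨ e = (GV.vv i j, GV.v i)) ∨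
    (∃ i, i + 1 < m ∧ e = (GV.v i, GV.u (i+1))) ∨
    (0 < m ∧ e = (GV.s, GV.u 0)) ∨
    (0 < m ∧ e = (GV.v (m-1), GV.t)) ∨
    (m = 0 ∧ e = (GV.s, GV.t)) := by
  rw [dupd_eq] at he
  have := mem_edgesOf_sandwich (fun i => [GV.u i, GV.uu i j, GV.vv i j, GV.v i]) GV.s GV.t
    (by simp) (by simp) (by simp) m e he
  obtain ⟨x, y⟩ := e
  rcases this with ⟨i, hi, h⟩ | ⟨i, hi, h1, h2⟩ | ⟨hm, h1, h2⟩ | ⟨hm, h1, h2⟩ | ⟨hm, h⟩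
  · rw [show edgesOf [GV.u i, GV.uu i j, GV.vv i j, GV.v i]
      = [(GV.u i, GV.uu i j), (GV.uu i j, GV.vv i j), (GV.vv i j, GV.v i)] from rfl] at h
    simp only [List.mem_cons, List.mem_singleton] at h
    exact Or.inl ⟨i, hi, by tauto⟩
  · simp at h1 h2
    exact Or.inr (Or.inl ⟨i, hi, by simp [← h1, h2]⟩)
  · simp at h2
    exact Or.inr (Or.inr (Or.inl ⟨hm, Prod.ext_iff.mpr ⟨h1, h2.symm⟩⟩))
  · simp at h1
    exact Or.inr (Or.inr (Or.inr (Or.inl ⟨hm, Prod.ext_iff.mpr ⟨h1.symm, h2⟩⟩)))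
  · exact Or.inr (Or.inr (Or.inr (Or.inr ⟨hm, h⟩)))

lemma xupd_cases {n : ℕ} {e : GV × GV} (he : e ∈ edgesOf (Xupd n)) :
    e.1 = GV.s ∨ (∃ j, e.1 = GV.w1 j) ∨ (∃ j, e.1 = GV.w2 j) := by
  rw [xupd_eq] at he
  have := mem_edgesOf_sandwich (fun j => [GV.w1 j, GV.w2 j]) GV.s GV.t
    (by simp) (by simp) (by simp) n e he
  obtain ⟨x, y⟩ := e
  rcases this with ⟨i, hi, h⟩ | ⟨i, hi, h1, h2⟩ | ⟨hm, h1, h2⟩ | ⟨hm, h1, h2⟩ | ⟨hm, h⟩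
  · rw [show edgesOf [GV.w1 i, GV.w2 i] = [(GV.w1 i, GV.w2 i)] from rfl] at h
    simp at h
    exact Or.inr (Or.inl ⟨i, by simp [h.1]⟩)
  · simp at h1
    exact Or.inr (Or.inr ⟨i, by simp [← h1]⟩)
  · exact Or.inl h1
  · simp at h1
    exact Or.inr (Or.inr ⟨n - 1, by simp [← h1]⟩)
  · exact Or.inl (by simp [Prod.ext_iff] at h; exact h.1)

lemma cross_Dold {m i : ℕ} (him : i < m) {x y : GV}
    (hxy : (x, y) ∈ edgesOf (Dold m)) (hx : low i x) (hy : ¬ low i y) : y = GV.u i := by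
  rcases dold_cases hxy with ⟨i', hi', h⟩ | ⟨i', hi', h⟩ | ⟨hm, h⟩ | ⟨hm, h⟩ | ⟨hm, h⟩
  · simp [Prod.ext_iff] at h
    obtain ⟨rfl, rfl⟩ := h
    simp [low] at hx hy; omega
  · simp [Prod.ext_iff] at h
    obtain ⟨rfl, rfl⟩ := h
    simp [low] at hx hy
    have : i = i' + 1 := by omega
    rw [this]
  · simp [Prod.ext_iff] at h
    obtain ⟨rfl, rfl⟩ := h
    simp [low] at hy
    have : i = 0 := by omega
    rw [this]
  · simp [Prod.ext_iff] at h
    obtain ⟨rfl, rfl⟩ := h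
    simp [low] at hx; omega
  · omega

lemma cross_Dupd {m i : ℕ} {j : Fin 3} (him : i < m) {x y : GV}
    (hxy : (x, y) ∈ edgesOf (Dupd m j)) (hx : low i x) (hy : ¬ low i y) : y = GV.u i := by
  rcases dupd_cases hxy with ⟨i', hi', h⟩ | ⟨i', hi', h⟩ | ⟨hm, h⟩ | ⟨hm, h⟩ | ⟨hm, h⟩
  · rcases h with h | h | h <;>
    · simp [Prod.ext_iff] at h
      obtain ⟨rfl, rfl⟩ := h
      simp [low] at hx hy; omega
  · simp [Prod.ext_iff] at h
    obtain ⟨rfl, rfl⟩ := h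
    simp [low] at hx hy
    have : i = i' + 1 := by omega
    rw [this]
  · simp [Prod.ext_iff] at h
    obtain ⟨rfl, rfl⟩ := h
    simp [low] at hy
    have : i = 0 := by omega
    rw [this]
  · simp [Prod.ext_iff] at h
    obtain ⟨rfl, rfl⟩ := h
    simp [low] at hx; omega
  · omega

lemma out_Dold {m i : ℕ} {c : GV} (h : (GV.u i, c) ∈ edgesOf (Dold m)) : c = GV.v i := by
  rcases dold_cases h with ⟨i', hi', h⟩ | ⟨i', hi', h⟩ | ⟨hm, h⟩ | ⟨hm, h⟩ | ⟨hm, h⟩ <;>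
    simp [Prod.ext_iff] at h <;> try exact absurd h.1 (by simp)
  obtain ⟨h1, h2⟩ := h
  rw [h2, h1]

lemma not_out_Xupd {n i : ℕ} {c : GV} (h : (GV.u i, c) ∈ edgesOf (Xupd n)) : False := by
  rcases xupd_cases h with h | ⟨j, h⟩ | ⟨j, h⟩ <;> simp at h

end FlowUpdate

open FlowUpdate in
/-- In any feasible update sequence for `G(C)`, for every round
`r` at or after the round in which `s` updates the blocking pair `B` and every
clause index `i`, at least one of the updates `(u i, D₁)`, `(u i, D₂)`,
`(u i, D₃)` was resolved strictly before round `r`. -/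
theorem stmt10 (C : List Clause) (n : ℕ) (hC : GoodFormula C n)
    (R : GV × Fin 6 → ℕ) (hR : (GC C n).Feasible R)
    (r : ℕ) (hr : R (GV.s, 5) ≤ r) (i : ℕ) (hi : i < C.length) :
    R (GV.u i, 2) < r ∨ R (GV.u i, 3) < r ∨ R (GV.u i, 4) < r := by
  by_contra hcon
  push_neg at hcon
  obtain ⟨h2, h3, h4⟩ := hcon
  obtain ⟨T, hT, hcap⟩ := hR r {x | x = (GV.s, 5) ∧ R x = r} (fun u hu => hu.2)
  set U : Set (GV × Fin 6) := {u | R u < r} ∪ {x | x = (GV.s, 5) ∧ R x = r} with hUdef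
  have hsU : (GV.s, (5 : Fin 6)) ∈ U := by
    rcases Nat.lt_or_ge (R (GV.s, 5)) r with h | h
    · exact Set.mem_union_left _ h
    · exact Set.mem_union_right _ ⟨rfl, le_antisymm hr h⟩
  -- the transient path of pair `p` (with old `Dold`, new `Dupd j`) uses `(u i, v i)`
  have keyD : ∀ (p : Fin 6) (j : Fin 3), (GC C n).old p = Dold C.length →
      (GC C n).new p = Dupd C.length j → (GV.u i, p) ∉ U →
      (GV.u i, GV.v i) ∈ edgesOf (T p) := by
    intro p j hold hnew hpU
    obtain ⟨⟨hhead, hlast, hchain, hnd⟩, hvalid, huniq⟩ := hT p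
    have htmem : (GC C n).t ∈ T p := mem_getLast? hlast
    obtain ⟨x, y, hxy, hlx, hly, hymem⟩ :=
      chain_cross (T p) hchain _ hhead (show low i GV.s from trivial)
        _ htmem (show ¬ low i GV.t from fun h => h)
    have hxy' : ((x, y) ∈ edgesOf ((GC C n).old p) ∧ ((x, y).1, p) ∉ U) ∨
        ((x, y) ∈ edgesOf ((GC C n).new p) ∧ ((x, y).1, p) ∈ U) := hxy
    have hy : y = GV.u i := by
      rcases hxy' with ⟨hmem, _⟩ | ⟨hmem, _⟩
      · rw [hold] at hmem
        exact cross_Dold hi hmem hlx hly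
      · rw [hnew] at hmem
        exact cross_Dupd hi hmem hlx hly
    subst hy
    obtain ⟨c, hc, hcmem⟩ :=
      chain_out_edge (T p) hchain _ hymem _ hlast (show GV.u i ≠ GV.t by simp)
    have hc' : ((GV.u i, c) ∈ edgesOf ((GC C n).old p) ∧ ((GV.u i, c).1, p) ∉ U) ∨
        ((GV.u i, c) ∈ edgesOf ((GC C n).new p) ∧ ((GV.u i, c).1, p) ∈ U) := hc
    rcases hc' with ⟨hmem, _⟩ | ⟨hmem, hcU⟩
    · rw [hold] at hmem
      rw [out_Dold hmem] at hcmem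
      exact hcmem
    · exact absurd hcU hpU
  -- the transient path of the pair `B = 5` uses `(u i, v i)`
  have keyB : (GV.u i, GV.v i) ∈ edgesOf (T 5) := by
    obtain ⟨⟨hhead, hlast, hchain, hnd⟩, hvalid, huniq⟩ := hT 5
    have hold : (GC C n).old 5 = Xupd n := rfl
    have hnew : (GC C n).new 5 = Dold C.length := rfl
    have htmem : (GC C n).t ∈ T 5 := mem_getLast? hlast
    obtain ⟨x, y, hxy, hlx, hly, hymem⟩ :=
      chain_cross (T 5) hchain _ hhead (show low i GV.s from trivial)
        _ htmem (show ¬ low i GV.t from fun h => h)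
    have hxy' : ((x, y) ∈ edgesOf ((GC C n).old 5) ∧ ((x, y).1, (5 : Fin 6)) ∉ U) ∨
        ((x, y) ∈ edgesOf ((GC C n).new 5) ∧ ((x, y).1, (5 : Fin 6)) ∈ U) := hxy
    have hy : y = GV.u i := by
      rcases hxy' with ⟨hmem, hcnd⟩ | ⟨hmem, _⟩
      · rw [hold] at hmem
        rcases xupd_cases hmem with h | ⟨j, h⟩ | ⟨j, h⟩
        · exact absurd (by rw [show x = GV.s from h]; exact hsU) hcnd
        · rw [show x = GV.w1 j from h] at hlx
          exact absurd hlx (fun hh => hh)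
        · rw [show x = GV.w2 j from h] at hlx
          exact absurd hlx (fun hh => hh)
      · rw [hnew] at hmem
        exact cross_Dold hi hmem hlx hly
    subst hy
    obtain ⟨c, hc, hcmem⟩ :=
      chain_out_edge (T 5) hchain _ hymem _ hlast (show GV.u i ≠ GV.t by simp)
    have hc' : ((GV.u i, c) ∈ edgesOf ((GC C n).old 5) ∧ ((GV.u i, c).1, (5 : Fin 6)) ∉ U) ∨
        ((GV.u i, c) ∈ edgesOf ((GC C n).new 5) ∧ ((GV.u i, c).1, (5 : Fin 6)) ∈ U) := hc
    rcases hc' with ⟨hmem, _⟩ | ⟨hmem, _⟩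
    · rw [hold] at hmem
      exact absurd hmem (fun h => not_out_Xupd h)
    · rw [hnew] at hmem
      rw [out_Dold hmem] at hcmem
      exact hcmem
  have hnotU : ∀ q : Fin 6, r ≤ R (GV.u i, q) → (GV.u i, q) ∉ U := by
    intro q hq hmem
    rcases (Set.mem_union _ _ _).mp hmem with h | h
    · exact absurd (show R (GV.u i, q) < r from h) (by omega)
    · obtain ⟨h1, _⟩ := h
      simp at h1
  have k2 : (GV.u i, GV.v i) ∈ edgesOf (T 2) := keyD 2 0 rfl rfl (hnotU 2 h2)
  have k3 : (GV.u i, GV.v i) ∈ edgesOf (T 3) := keyD 3 1 rfl rfl (hnotU 3 h3)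
  have k4 : (GV.u i, GV.v i) ∈ edgesOf (T 4) := keyD 4 2 rfl rfl (hnotU 4 h4)
  have hc := hcap (GV.u i) (GV.v i)
  rw [Fin.sum_univ_six] at hc
  have hd : ∀ p : Fin 6, (GC C n).demand p = 1 := fun _ => rfl
  have hcapv : (GC C n).cap (GV.u i) (GV.v i) = 3 := by simp [GC, capC]
  simp only [hd, hcapv] at hc
  rw [if_pos k2, if_pos k3, if_pos k4, if_pos keyB] at hc
  split_ifs at hc <;> omega
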